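/- Let G = (C₄ × C₄) ⋊ C₂ with generators a, b of the C₄ factors and c the generator of C₂ acting by inversion, and let H = ⟨a, b⟩. Let ν be the character of H with ν(a) = 1, ν(b) = i. Let β, γ be the linear characters of G with β(b) = γ(c) = −1 and β(a) = β(c) = γ(a) = γ(b) = 1. Then the character of the tensor square (Ind_H^G ν)⊗(Ind_H^G ν) equals 1 + β + γ + βγ. -/

import Mathlib

/-- The homomorphism `C₂ → Aut(N)` sending the nontrivial element of `C₂`
to the inversion automorphism of the abelian group `N`. -/
noncomputable def invAction (N : Type*) [CommGroup N] :
    Multiplicative (ZMod 2) →* MulAut N :=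
  AddMonoidHom.toMultiplicativeLeft <|
    ZMod.lift 2 ⟨zmultiplesHom (Additive (MulAut N)) (Additive.ofMul (MulEquiv.inv N)), by
      have h : (MulEquiv.inv N) * (MulEquiv.inv N) = 1 := by ext x; simp
      simp only [zmultiplesHom_apply]
      norm_num
      rw [two_zsmul, ← ofMul_mul, h, ofMul_one]⟩

/-- The cyclic group of order `n` (multiplicative). -/
abbrev Cyc (n : ℕ) := Multiplicative (ZMod n)

/-- The semidirect product `(C₄ × C₄) ⋊ C₂`, where the nontrivial element of `C₂`
acts by inverting both factors: the group `G34`. -/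
noncomputable abbrev G34 : Type := (Cyc 4 × Cyc 4) ⋊[invAction (Cyc 4 × Cyc 4)] Cyc 2

open Classical in
/-- The induced character: for a finite group `G`, a subgroup `H` and a function
`χ : H → ℂ`, `Ind_H^G χ (g) = (1/|H|) · Σ_{x ∈ G} χ°(x⁻¹ g x)`, where `χ°` is the
extension of `χ` by zero to `G`. -/
noncomputable def indChar {G : Type*} [Group G] [Fintype G] (H : Subgroup G)
    (χ : H → ℂ) : G → ℂ := fun g =>
  (Nat.card H : ℂ)⁻¹ * ∑ x : G, if h : x⁻¹ * g * x ∈ H then χ ⟨x⁻¹ * g * x, h⟩ else 0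

open Classical in
theorem indChar_def' {G : Type*} [Group G] [Fintype G] (H : Subgroup G) (χ : H → ℂ) (g : G) :
    indChar H χ g = (Nat.card H : ℂ)⁻¹ *
      ∑ x : G, if h : x⁻¹ * g * x ∈ H then χ ⟨x⁻¹ * g * x, h⟩ else 0 := rfl

set_option maxHeartbeats 1000000 in
/-- In `G34 = (C₄ × C₄) ⋊ C₂` with generators `a, b` of the `C₄` factors and `c`
the generator of `C₂` acting by inversion, let `H = ⟨a, b⟩`, let `ν` be the linear
character of `H` with `ν(a) = 1`, `ν(b) = i`, and `β, γ` the linear characters of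
`G` with `β(b) = γ(c) = −1`, `β(a) = β(c) = γ(a) = γ(b) = 1`.  Then the character
of the tensor square `(Ind_H^G ν) ⊗ (Ind_H^G ν)` equals `1 + β + γ + βγ`. -/
theorem G34_tensor_square_character [Fintype G34]
    (H : Subgroup G34)
    (hH : H = (SemidirectProduct.inl : (Cyc 4 × Cyc 4) →* G34).range)
    (ν : H →* ℂ) (β γ : G34 →* ℂ)
    (hνa : ν ⟨SemidirectProduct.inl (Multiplicative.ofAdd (1 : ZMod 4), 1),
      hH ▸ MonoidHom.mem_range.mpr ⟨_, rfl⟩⟩ = 1)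
    (hνb : ν ⟨SemidirectProduct.inl (1, Multiplicative.ofAdd (1 : ZMod 4)),
      hH ▸ MonoidHom.mem_range.mpr ⟨_, rfl⟩⟩ = Complex.I)
    (hβa : β (SemidirectProduct.inl (Multiplicative.ofAdd (1 : ZMod 4), 1)) = 1)
    (hβb : β (SemidirectProduct.inl (1, Multiplicative.ofAdd (1 : ZMod 4))) = -1)
    (hβc : β (SemidirectProduct.inr (Multiplicative.ofAdd (1 : ZMod 2))) = 1)
    (hγa : γ (SemidirectProduct.inl (Multiplicative.ofAdd (1 : ZMod 4), 1)) = 1)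
    (hγb : γ (SemidirectProduct.inl (1, Multiplicative.ofAdd (1 : ZMod 4))) = 1)
    (hγc : γ (SemidirectProduct.inr (Multiplicative.ofAdd (1 : ZMod 2))) = -1) :
    ∀ g : G34, indChar H (fun x => ν x) g * indChar H (fun x => ν x) g =
      1 + β g + γ g + β g * γ g := by
  
  subst hH
  intro g
  have gen1 : ∀ x : ZMod 4, (Multiplicative.ofAdd (1:ZMod 4))^x.val = Multiplicative.ofAdd x := by
    intro x; rw [← ofAdd_nsmul, nsmul_eq_mul, mul_one, ZMod.natCast_rightInverse x]
  have gen2 : ∀ k : ZMod 2, (Multiplicative.ofAdd (1:ZMod 2))^k.val = Multiplicative.ofAdd k := by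
    intro k; rw [← ofAdd_nsmul, nsmul_eq_mul, mul_one, ZMod.natCast_rightInverse k]
  have genprod : ∀ p : Cyc 4 × Cyc 4,
      p = (Multiplicative.ofAdd (1:ZMod 4), (1:Cyc 4)) ^ (Multiplicative.toAdd p.1).val
        * ((1:Cyc 4), Multiplicative.ofAdd (1:ZMod 4)) ^ (Multiplicative.toAdd p.2).val := by
    intro p
    simp only [Prod.pow_mk, Prod.mk_mul_mk, one_pow, mul_one, one_mul, gen1]
    rfl
  have prodval : ∀ (f : (Cyc 4 × Cyc 4) →* ℂ) (p : Cyc 4 × Cyc 4),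
      f p = f (Multiplicative.ofAdd (1:ZMod 4), 1) ^ (Multiplicative.toAdd p.1).val
        * f (1, Multiplicative.ofAdd (1:ZMod 4)) ^ (Multiplicative.toAdd p.2).val := by
    intro f p
    conv_lhs => rw [genprod p]
    rw [map_mul, map_pow, map_pow]
  set χ : (Cyc 4 × Cyc 4) →* ℂ :=
    ν.comp (MonoidHom.rangeRestrict SemidirectProduct.inl) with hχdef
  have hχa : χ (Multiplicative.ofAdd (1:ZMod 4), 1) = 1 := hνa
  have hχb : χ (1, Multiplicative.ofAdd (1:ZMod 4)) = Complex.I := hνb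
  have hχval : ∀ p : Cyc 4 × Cyc 4, χ p = Complex.I ^ (Multiplicative.toAdd p.2).val := by
    intro p; rw [prodval χ p, hχa, hχb, one_pow, one_mul]
  have hν' : ∀ (z : G34) (h : z ∈ (SemidirectProduct.inl : (Cyc 4 × Cyc 4) →* G34).range),
      ν ⟨z, h⟩ = Complex.I ^ (Multiplicative.toAdd z.left.2).val := by
    intro z h
    rcases MonoidHom.mem_range.mp h with ⟨p, rfl⟩
    exact hχval p
  have homval : ∀ (f : G34 →* ℂ) (z : G34),
      f z = f (SemidirectProduct.inl (Multiplicative.ofAdd (1:ZMod 4), 1))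
              ^ (Multiplicative.toAdd z.left.1).val
          * f (SemidirectProduct.inl (1, Multiplicative.ofAdd (1:ZMod 4)))
              ^ (Multiplicative.toAdd z.left.2).val
          * f (SemidirectProduct.inr (Multiplicative.ofAdd (1:ZMod 2)))
              ^ (Multiplicative.toAdd z.right).val := by
    intro f z
    have h2 : z.right = (Multiplicative.ofAdd (1:ZMod 2)) ^ (Multiplicative.toAdd z.right).val := by
      rw [gen2]; rfl
    have h3 : f (SemidirectProduct.inr z.right)
        = f (SemidirectProduct.inr (Multiplicative.ofAdd (1:ZMod 2)))
            ^ (Multiplicative.toAdd z.right).val := by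
      conv_lhs => rw [h2]
      simp only [map_pow]
    have h4 : f (SemidirectProduct.inl z.left)
        = f (SemidirectProduct.inl (Multiplicative.ofAdd (1:ZMod 4), 1))
            ^ (Multiplicative.toAdd z.left.1).val
          * f (SemidirectProduct.inl (1, Multiplicative.ofAdd (1:ZMod 4)))
            ^ (Multiplicative.toAdd z.left.2).val := by
      conv_lhs => rw [genprod z.left]
      simp only [map_mul, map_pow]
    conv_lhs => rw [← SemidirectProduct.inl_left_mul_inr_right z]
    rw [map_mul, h4, h3]
  have hβval : ∀ z : G34, β z = (-1:ℂ) ^ (Multiplicative.toAdd z.left.2).val := by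
    intro z; rw [homval β z, hβa, hβb, hβc, one_pow, one_pow, one_mul, mul_one]
  have hγval : ∀ z : G34, γ z = (-1:ℂ) ^ (Multiplicative.toAdd z.right).val := by
    intro z; rw [homval γ z, hγa, hγb, hγc, one_pow, one_pow, one_mul, one_mul]
  have mem_iff : ∀ z : G34, z ∈ (SemidirectProduct.inl : (Cyc 4 × Cyc 4) →* G34).range ↔ z.right = 1 := by
    intro z
    rw [SemidirectProduct.range_inl_eq_ker_rightHom, MonoidHom.mem_ker]
    exact Iff.rfl
  have conj_right : ∀ x : G34, (x⁻¹ * g * x).right = g.right := by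
    intro x
    rw [SemidirectProduct.mul_right, SemidirectProduct.mul_right, SemidirectProduct.inv_right,
      mul_comm x.right⁻¹ g.right, mul_assoc, inv_mul_cancel, mul_one]
  rcases (by decide : ∀ k : ZMod 2, k = 0 ∨ k = 1) (Multiplicative.toAdd g.right) with hk | hk
  · -- g ∈ H : g.right = 1
    have hg1 : g.right = 1 := by
      rw [← ofAdd_toAdd g.right, hk]; rfl
    have hg : g = SemidirectProduct.inl g.left := by
      conv_lhs => rw [← SemidirectProduct.inl_left_mul_inr_right g]
      rw [hg1, map_one, mul_one]
    have conj_left : ∀ x : G34,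
        (x⁻¹ * g * x).left = (invAction (Cyc 4 × Cyc 4)) x.right⁻¹ g.left := by
      intro x
      conv_lhs => rw [hg]
      rw [SemidirectProduct.mul_left, SemidirectProduct.mul_left, SemidirectProduct.inv_left,
        SemidirectProduct.left_inl, SemidirectProduct.mul_right, SemidirectProduct.inv_right,
        SemidirectProduct.right_inl, mul_one, ← map_mul, ← map_mul]
      congr 1
      rw [mul_comm x.left⁻¹ g.left, mul_assoc, inv_mul_cancel, mul_one]
    have hterm : ∀ (x : G34)
        (inst : Decidable (x⁻¹ * g * x ∈ (SemidirectProduct.inl : (Cyc 4 × Cyc 4) →* G34).range)),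
        (@dite ℂ (x⁻¹ * g * x ∈ (SemidirectProduct.inl : (Cyc 4 × Cyc 4) →* G34).range) inst
          (fun h => ν ⟨x⁻¹ * g * x, h⟩) (fun _ => 0))
        = Complex.I ^ ((Multiplicative.toAdd
            (((invAction (Cyc 4 × Cyc 4)) x.right⁻¹ g.left).2)).val) := by
      intro x inst
      have hmem : x⁻¹ * g * x ∈ (SemidirectProduct.inl : (Cyc 4 × Cyc 4) →* G34).range :=
        (mem_iff _).mpr (by rw [conj_right, hg1])
      rw [dif_pos hmem, hν', conj_left]
    have hφ1 : (invAction (Cyc 4 × Cyc 4)) (Multiplicative.ofAdd (1 : ZMod 2))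
        = MulEquiv.inv _ := rfl
    let e : (Cyc 4 × Cyc 4) × Cyc 2 ≃ G34 :=
      ⟨fun nk => ⟨nk.1, nk.2⟩, fun z => (z.left, z.right), fun _ => rfl, fun _ => rfl⟩
    have hF0 : (invAction (Cyc 4 × Cyc 4)) (Multiplicative.ofAdd (0:ZMod 2))⁻¹ g.left = g.left := by
      rw [show (Multiplicative.ofAdd (0:ZMod 2)) = 1 from rfl, inv_one, map_one]
      rfl
    have hF1 : (invAction (Cyc 4 × Cyc 4)) (Multiplicative.ofAdd (1:ZMod 2))⁻¹ g.left
        = g.left⁻¹ := by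
      rw [show (Multiplicative.ofAdd (1:ZMod 2))⁻¹ = Multiplicative.ofAdd (1:ZMod 2) from by
        decide, hφ1]
      rfl
    have hcard : ((Nat.card ((SemidirectProduct.inl : (Cyc 4 × Cyc 4) →* G34).range) : ℂ)) = 16 := by
      rw [← Nat.card_congr
        (MonoidHom.ofInjective (f := (SemidirectProduct.inl : (Cyc 4 × Cyc 4) →* G34))
          SemidirectProduct.inl_injective).toEquiv]
      rw [Nat.card_eq_fintype_card]
      norm_num
    have hind : indChar (SemidirectProduct.inl : (Cyc 4 × Cyc 4) →* G34).range (fun x => ν x) g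
        = Complex.I ^ (Multiplicative.toAdd g.left.2).val
          + Complex.I ^ (Multiplicative.toAdd g.left⁻¹.2).val := by
      rw [indChar_def', hcard]
      simp only [hterm]
      rw [← Equiv.sum_comp e (fun z : G34 => Complex.I ^ ((Multiplicative.toAdd
            (((invAction (Cyc 4 × Cyc 4)) z.right⁻¹ g.left).2)).val))]
      rw [Fintype.sum_prod_type]
      have inner : ∀ n : Cyc 4 × Cyc 4, (∑ k : Cyc 2, Complex.I ^ ((Multiplicative.toAdd
            (((invAction (Cyc 4 × Cyc 4)) ((e (n, k)).right)⁻¹ g.left).2)).val))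
          = Complex.I ^ (Multiplicative.toAdd g.left.2).val
            + Complex.I ^ (Multiplicative.toAdd g.left⁻¹.2).val := by
        intro n
        rw [show (Finset.univ : Finset (Cyc 2))
            = {Multiplicative.ofAdd (0:ZMod 2), Multiplicative.ofAdd (1:ZMod 2)} from by decide,
          Finset.sum_insert (by decide), Finset.sum_singleton]
        have h0 : (e (n, Multiplicative.ofAdd (0:ZMod 2))).right
            = Multiplicative.ofAdd (0:ZMod 2) := rfl
        have h1 : (e (n, Multiplicative.ofAdd (1:ZMod 2))).right
            = Multiplicative.ofAdd (1:ZMod 2) := rfl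
        rw [h0, h1, hF0, hF1]
      simp only [inner]
      rw [Finset.sum_const, Finset.card_univ, nsmul_eq_mul, ← mul_assoc]
      norm_num
    have hγg : γ g = 1 := by
      rw [hγval, hk]
      norm_num
    have hβg : β g = (-1:ℂ) ^ (Multiplicative.toAdd g.left.2).val := hβval g
    rw [hind, hγg, hβg]
    have hq : Multiplicative.toAdd g.left⁻¹.2 = -(Multiplicative.toAdd g.left.2) := rfl
    rw [hq]
    rcases (by decide : ∀ z : ZMod 4, z = 0 ∨ z = 1 ∨ z = 2 ∨ z = 3)
      (Multiplicative.toAdd g.left.2) with h | h | h | h <;> rw [h] <;>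
      norm_num [show (-(0:ZMod 4)) = 0 from by decide, show (-(1:ZMod 4)) = 3 from by decide,
        show (-(2:ZMod 4)) = 2 from by decide, show (-(3:ZMod 4)) = 1 from by decide,
        show ((0:ZMod 4)).val = 0 from rfl, show ((1:ZMod 4)).val = 1 from rfl,
        show ((2:ZMod 4)).val = 2 from rfl, show ((3:ZMod 4)).val = 3 from rfl,
        show ((-2 : ZMod 4)).val = 2 from by decide, show ((-3 : ZMod 4)).val = 1 from by decide,
        show ((-1 : ZMod 4)).val = 3 from by decide, show ((-0 : ZMod 4)).val = 0 from by decide,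
        pow_succ, Complex.I_mul_I] <;> ring
  · -- g ∉ H
    have hγg : γ g = -1 := by rw [hγval, hk, show (1 : ZMod 2).val = 1 from rfl]; norm_num
    have hind : indChar (SemidirectProduct.inl : (Cyc 4 × Cyc 4) →* G34).range (fun x => ν x) g = 0 := by
      rw [indChar_def']
      refine Eq.trans (congrArg (fun S : ℂ =>
        ((Nat.card ((SemidirectProduct.inl : (Cyc 4 × Cyc 4) →* G34).range) : ℂ))⁻¹ * S)
        (Finset.sum_eq_zero fun x _ => dif_neg ?_)) (mul_zero _)
      rw [mem_iff, conj_right]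
      intro h
      rw [h] at hk
      exact absurd hk (by decide)
    rw [hind, hγg]
    ring
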